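/- arXiv:2302.04088 — 6 statements merged into one kernel-verified Lean document; each statement's English description precedes it below -/
import Mathlib

section
/- (Proposition 1, Möbius part: manifold preserving.) For every c > 0 and all x, y ∈ E with c·‖x‖² < 1 and c·‖y‖² < 1, the Möbius sum satisfies c·‖x ⊕_c y‖² < 1; that is, Möbius addition maps the Poincaré ball B_c × B_c into B_c. -/
open scoped RealInnerProductSpace

variable {E : Type*} [NormedAddCommGroup E] [InnerProductSpace ℝ E] [FiniteDimensional ℝ E]

/-- Möbius addition on the Poincaré ball of curvature `-c`. -/
noncomputable def mobiusAdd (c : ℝ) (x y : E) : E :=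
  (1 / (1 + 2 * c * ⟪x, y⟫ + c ^ 2 * ‖x‖ ^ 2 * ‖y‖ ^ 2)) •
    ((1 + 2 * c * ⟪x, y⟫ + c * ‖y‖ ^ 2) • x + (1 - c * ‖x‖ ^ 2) • y)

theorem mobiusAdd_mem_ball (c : ℝ) (hc : 0 < c) (x y : E)
    (hx : c * ‖x‖ ^ 2 < 1) (hy : c * ‖y‖ ^ 2 < 1) :
    c * ‖mobiusAdd c x y‖ ^ 2 < 1 := by
  set t : ℝ := ⟪x, y⟫ with ht
  set a : ℝ := ‖x‖ with ha
  set b : ℝ := ‖y‖ with hb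
  have ha0 : 0 ≤ a := norm_nonneg x
  have hb0 : 0 ≤ b := norm_nonneg y
  have hCS : t ≤ a * b := real_inner_le_norm x y
  have hCS' : -(a * b) ≤ t := neg_le_of_abs_le (abs_real_inner_le_norm x y)
  set D : ℝ := 1 + 2 * c * t + c ^ 2 * a ^ 2 * b ^ 2 with hD
  have hcab : c * a * b < 1 := by
    nlinarith [mul_nonneg (mul_nonneg hc.le (sq_nonneg a)) hc.le,
      sq_nonneg (c * a * b - 1), mul_nonneg (mul_nonneg hc.le (sq_nonneg a)) (sq_nonneg b)]
  have hD0 : 0 < D := by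
    have hDE : D = (1 - c * a * b) ^ 2 + 2 * c * (t + a * b) := by rw [hD]; ring
    have h2 : 0 < (1 - c * a * b) ^ 2 := pow_pos (by linarith) 2
    have h3 : 0 ≤ 2 * c * (t + a * b) := mul_nonneg (by linarith) (by linarith)
    linarith
  have hN : ‖(1 + 2 * c * t + c * b ^ 2) • x + (1 - c * a ^ 2) • y‖ ^ 2 =
      (1 + 2 * c * t + c * b ^ 2) ^ 2 * a ^ 2 +
        2 * ((1 + 2 * c * t + c * b ^ 2) * (1 - c * a ^ 2)) * t +
        (1 - c * a ^ 2) ^ 2 * b ^ 2 := by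
    rw [norm_add_sq_real, norm_smul, norm_smul, real_inner_smul_left, real_inner_smul_right]
    simp only [Real.norm_eq_abs, mul_pow, sq_abs, ← ht, ← ha, ← hb]
    ring
  have hmob : ‖mobiusAdd c x y‖ ^ 2 =
      (1 / D) ^ 2 * ‖(1 + 2 * c * t + c * b ^ 2) • x + (1 - c * a ^ 2) • y‖ ^ 2 := by
    rw [mobiusAdd, norm_smul, mul_pow, Real.norm_eq_abs, sq_abs]
  have key : c * ‖mobiusAdd c x y‖ ^ 2 = 1 - (1 - c * a ^ 2) * (1 - c * b ^ 2) / D := by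
    rw [hmob, hN]
    field_simp
    ring
  rw [key]
  have : 0 < (1 - c * a ^ 2) * (1 - c * b ^ 2) / D :=
    div_pos (mul_pos (sub_pos.2 hx) (sub_pos.2 hy)) hD0
  linarith
end

section
/- For every c > 0 and all x, y ∈ E with c·‖x‖² < 1 and c·‖y‖² < 1, one has the norm identity ‖(−x) ⊕_c y‖² = ‖x − y‖² / (1 − 2c·⟨x,y⟩ + c²·‖x‖²·‖y‖²). -/
open scoped RealInnerProductSpace

variable {E : Type*} [NormedAddCommGroup E] [InnerProductSpace ℝ E] [FiniteDimensional ℝ E]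

theorem norm_sq_mobiusAdd_neg (c : ℝ) (hc : 0 < c) (x y : E)
    (hx : c * ‖x‖ ^ 2 < 1) (hy : c * ‖y‖ ^ 2 < 1) :
    ‖mobiusAdd c (-x) y‖ ^ 2 =
      ‖x - y‖ ^ 2 / (1 - 2 * c * ⟪x, y⟫ + c ^ 2 * ‖x‖ ^ 2 * ‖y‖ ^ 2) := by
  have habs : |⟪x, y⟫| ≤ ‖x‖ * ‖y‖ := abs_real_inner_le_norm x y
  have hxy : c * (‖x‖ * ‖y‖) < 1 := by
    nlinarith [norm_nonneg x, norm_nonneg y, mul_pos hc hc, sq_nonneg (‖x‖ - ‖y‖)]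
  have hD : 0 < 1 - 2 * c * ⟪x, y⟫ + c ^ 2 * ‖x‖ ^ 2 * ‖y‖ ^ 2 := by
    nlinarith [abs_le.mp habs, sq_nonneg (1 - c * (‖x‖ * ‖y‖))]
  have hDne : (1 - 2 * c * ⟪x, y⟫ + c ^ 2 * ‖x‖ ^ 2 * ‖y‖ ^ 2) ≠ 0 := ne_of_gt hD
  unfold mobiusAdd
  rw [inner_neg_left, norm_neg]
  set A : ℝ := 1 + 2 * c * -⟪x, y⟫ + c * ‖y‖ ^ 2 with hA
  set B : ℝ := 1 - c * ‖x‖ ^ 2 with hB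
  set D : ℝ := 1 + 2 * c * -⟪x, y⟫ + c ^ 2 * ‖x‖ ^ 2 * ‖y‖ ^ 2 with hDdef
  have hDeq : D = 1 - 2 * c * ⟪x, y⟫ + c ^ 2 * ‖x‖ ^ 2 * ‖y‖ ^ 2 := by rw [hDdef]; ring
  have hsub : ‖x - y‖ ^ 2 = ‖x‖ ^ 2 - 2 * ⟪x, y⟫ + ‖y‖ ^ 2 := by
    rw [@norm_sub_sq_real]
  have hu : ‖A • (-x) + B • y‖ ^ 2 =
      A ^ 2 * ‖x‖ ^ 2 - 2 * (A * B) * ⟪x, y⟫ + B ^ 2 * ‖y‖ ^ 2 := by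
    rw [@norm_add_sq_real, norm_smul, norm_smul, norm_neg, real_inner_smul_left,
      real_inner_smul_right, inner_neg_left]
    simp only [Real.norm_eq_abs, mul_pow, sq_abs]
    ring
  rw [norm_smul, mul_pow, hu, Real.norm_eq_abs, sq_abs, hsub, hA, hB, hDeq]
  field_simp
  ring
end

section
/- (Second cancellation law.) For every c > 0 and all u, x ∈ E with c·‖u‖² < 1 and c·‖x‖² < 1, one has u ⊕_c ((−u) ⊕_c x) = x. -/
open scoped RealInnerProductSpace

variable {E : Type*} [NormedAddCommGroup E] [InnerProductSpace ℝ E] [FiniteDimensional ℝ E]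

lemma aux_inner_combo (r s : ℝ) (u x : E) :
    ⟪u, r • u + s • x⟫ = r * ‖u‖ ^ 2 + s * ⟪u, x⟫ := by
  simp [inner_add_right, real_inner_smul_right, real_inner_self_eq_norm_sq]

lemma aux_norm_combo (r s : ℝ) (u x : E) :
    ‖r • u + s • x‖ ^ 2 = r ^ 2 * ‖u‖ ^ 2 + 2 * (r * s) * ⟪u, x⟫ + s ^ 2 * ‖x‖ ^ 2 := by
  rw [← real_inner_self_eq_norm_sq]
  simp only [inner_add_left, inner_add_right, real_inner_smul_left, real_inner_smul_right,
    real_inner_comm x u]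
  rw [real_inner_self_eq_norm_sq, real_inner_self_eq_norm_sq]
  ring

theorem mobiusAdd_left_cancel' (c : ℝ) (hc : 0 < c) (u x : E)
    (hu : c * ‖u‖ ^ 2 < 1) (hx : c * ‖x‖ ^ 2 < 1) :
    mobiusAdd c u (mobiusAdd c (-u) x) = x := by
  have habs : |⟪u, x⟫| ≤ ‖u‖ * ‖x‖ := abs_real_inner_le_norm u x
  have hupp : ⟪u, x⟫ ≤ ‖u‖ * ‖x‖ := le_of_abs_le habs
  have hlow : -(‖u‖ * ‖x‖) ≤ ⟪u, x⟫ := neg_le_of_abs_le habs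
  have hcux : c * (‖u‖ * ‖x‖) < 1 := by
    nlinarith [mul_nonneg hc.le (sq_nonneg (‖u‖ - ‖x‖)), norm_nonneg u, norm_nonneg x]
  have hD : 0 < 1 - 2 * c * ⟪u, x⟫ + c ^ 2 * ‖u‖ ^ 2 * ‖x‖ ^ 2 := by
    nlinarith [mul_pos (sub_pos.mpr hcux) (sub_pos.mpr hcux),
      mul_nonneg hc.le (sub_nonneg.mpr hupp)]
  have hcp : (0:ℝ) < 1 - c * ‖u‖ ^ 2 := by linarith
  set a : ℝ := ⟪u, x⟫ with ha
  set p : ℝ := ‖u‖ ^ 2 with hp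
  set q : ℝ := ‖x‖ ^ 2 with hq
  set D : ℝ := 1 - 2 * c * a + c ^ 2 * p * q with hDdef
  have hDne : D ≠ 0 := ne_of_gt hD
  have hcpne : (1:ℝ) - c * p ≠ 0 := ne_of_gt hcp
  set α : ℝ := -(1 - 2 * c * a + c * q) / D with hα
  set β : ℝ := (1 - c * p) / D with hβ
  have hv : mobiusAdd c (-u) x = α • u + β • x := by
    rw [mobiusAdd, inner_neg_left, norm_neg, ← ha, ← hp, ← hq]
    have h1 : 1 + 2 * c * -a + c ^ 2 * p * q = D := by rw [hDdef]; ring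
    rw [h1, hα, hβ]
    match_scalars <;> field_simp <;> ring
  have hiv : ⟪u, mobiusAdd c (-u) x⟫ = α * p + β * a := by
    rw [hv, aux_inner_combo, ← ha, ← hp]
  have hnv : ‖mobiusAdd c (-u) x‖ ^ 2 = α ^ 2 * p + 2 * (α * β) * a + β ^ 2 * q := by
    rw [hv, aux_norm_combo, ← ha, ← hp, ← hq]
  have hD2 : 1 + 2 * c * (α * p + β * a) + c ^ 2 * p * (α ^ 2 * p + 2 * (α * β) * a + β ^ 2 * q)
      = (1 - c * p) ^ 2 / D := by
    rw [hα, hβ]; field_simp; rw [hDdef]; ring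
  rw [mobiusAdd, hiv, hnv, ← hp, hD2, hv]
  have hKne : ((1:ℝ) - c * p) ^ 2 / D ≠ 0 := by positivity
  have e1 : (1 + 2 * c * (α * p + β * a) + c * (α ^ 2 * p + 2 * (α * β) * a + β ^ 2 * q))
      + (1 - c * p) * α = 0 := by
    rw [hα, hβ]; field_simp; rw [hDdef]; ring
  have e2 : (1 / ((1 - c * p) ^ 2 / D)) * ((1 - c * p) * β) = 1 := by
    rw [hβ]; field_simp
  calc (1 / ((1 - c * p) ^ 2 / D)) •
        ((1 + 2 * c * (α * p + β * a) + c * (α ^ 2 * p + 2 * (α * β) * a + β ^ 2 * q)) • u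
          + (1 - c * p) • (α • u + β • x))
      = ((1 / ((1 - c * p) ^ 2 / D)) * ((1 + 2 * c * (α * p + β * a)
          + c * (α ^ 2 * p + 2 * (α * β) * a + β ^ 2 * q)) + (1 - c * p) * α)) • u
        + ((1 / ((1 - c * p) ^ 2 / D)) * ((1 - c * p) * β)) • x := by module
    _ = x := by rw [e1, e2, mul_zero, zero_smul, zero_add, one_smul]
end

section
/- (Gyrations preserve the norm.) For c > 0 and u, x, v ∈ E with c·‖u‖² < 1, c·‖x‖² < 1, c·‖v‖² < 1, define the gyration gyr[u,x](v) := (−(u ⊕_c x)) ⊕_c (u ⊕_c (x ⊕_c v)). Then ‖gyr[u,x](v)‖ = ‖v‖. -/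
open scoped RealInnerProductSpace

variable {E : Type*} [NormedAddCommGroup E] [InnerProductSpace ℝ E] [FiniteDimensional ℝ E]

/-- The gyration `gyr[u,x](v)`. -/
noncomputable def gyration (c : ℝ) (u x v : E) : E :=
  mobiusAdd c (-(mobiusAdd c u x)) (mobiusAdd c u (mobiusAdd c x v))

private lemma normsq_combo (s t : ℝ) (x y : E) :
    ‖s • x + t • y‖ ^ 2 = s ^ 2 * ‖x‖ ^ 2 + 2 * (s * t) * ⟪x, y⟫ + t ^ 2 * ‖y‖ ^ 2 := by
  rw [← real_inner_self_eq_norm_sq]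
  simp only [inner_add_left, inner_add_right, real_inner_smul_left, real_inner_smul_right]
  rw [real_inner_self_eq_norm_sq, real_inner_self_eq_norm_sq, real_inner_comm x y]
  ring

private lemma D_pos {c : ℝ} (hc : 0 < c) {x y : E} (hx : c * ‖x‖ ^ 2 < 1)
    (hy : c * ‖y‖ ^ 2 < 1) : 0 < 1 + 2 * c * ⟪x, y⟫ + c ^ 2 * ‖x‖ ^ 2 * ‖y‖ ^ 2 := by
  have h := abs_real_inner_le_norm x y
  have h2 := (abs_le.mp h).1
  have h1 : c * (‖x‖ * ‖y‖) < 1 := by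
    nlinarith [sq_nonneg (‖x‖ - ‖y‖), norm_nonneg x, norm_nonneg y]
  nlinarith [mul_pos (sub_pos.mpr h1) (sub_pos.mpr h1),
    mul_nonneg hc.le (by linarith : (0:ℝ) ≤ ⟪x, y⟫ + ‖x‖ * ‖y‖)]

private lemma mobius_normsq {c : ℝ} {x y : E}
    (hD : (1 + 2 * c * ⟪x, y⟫ + c ^ 2 * ‖x‖ ^ 2 * ‖y‖ ^ 2) ≠ 0) :
    ‖mobiusAdd c x y‖ ^ 2 * (1 + 2 * c * ⟪x, y⟫ + c ^ 2 * ‖x‖ ^ 2 * ‖y‖ ^ 2)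
      = ‖x‖ ^ 2 + 2 * ⟪x, y⟫ + ‖y‖ ^ 2 := by
  rw [mobiusAdd, norm_smul, mul_pow, normsq_combo]
  simp only [Real.norm_eq_abs, sq_abs]
  field_simp
  ring

private lemma mobius_inner {c : ℝ} {x y : E}
    (hD : (1 + 2 * c * ⟪x, y⟫ + c ^ 2 * ‖x‖ ^ 2 * ‖y‖ ^ 2) ≠ 0) (z : E) :
    ⟪mobiusAdd c x y, z⟫ * (1 + 2 * c * ⟪x, y⟫ + c ^ 2 * ‖x‖ ^ 2 * ‖y‖ ^ 2)
      = (1 + 2 * c * ⟪x, y⟫ + c * ‖y‖ ^ 2) * ⟪x, z⟫ + (1 - c * ‖x‖ ^ 2) * ⟪y, z⟫ := by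
  rw [mobiusAdd]
  simp only [inner_add_left, real_inner_smul_left]
  field_simp

private lemma mobius_one_sub {c : ℝ} {x y : E}
    (hD : (1 + 2 * c * ⟪x, y⟫ + c ^ 2 * ‖x‖ ^ 2 * ‖y‖ ^ 2) ≠ 0) :
    (1 - c * ‖mobiusAdd c x y‖ ^ 2) * (1 + 2 * c * ⟪x, y⟫ + c ^ 2 * ‖x‖ ^ 2 * ‖y‖ ^ 2)
      = (1 - c * ‖x‖ ^ 2) * (1 - c * ‖y‖ ^ 2) := by
  linear_combination (-c) * mobius_normsq hD

private lemma mobius_lt {c : ℝ} (hc : 0 < c) {x y : E} (hx : c * ‖x‖ ^ 2 < 1)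
    (hy : c * ‖y‖ ^ 2 < 1) : c * ‖mobiusAdd c x y‖ ^ 2 < 1 := by
  have hD := D_pos hc hx hy
  have h := mobius_one_sub (c := c) (x := x) (y := y) hD.ne'
  have hpos : (0:ℝ) < (1 - c * ‖x‖ ^ 2) * (1 - c * ‖y‖ ^ 2) :=
    mul_pos (by linarith) (by linarith)
  nlinarith [h, hD, hpos]

theorem norm_gyration (c : ℝ) (hc : 0 < c) (u x v : E)
    (hu : c * ‖u‖ ^ 2 < 1) (hx : c * ‖x‖ ^ 2 < 1) (hv : c * ‖v‖ ^ 2 < 1) :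
    ‖gyration c u x v‖ = ‖v‖ := by
  have hDxv : 0 < (1 + 2 * c * ⟪x, v⟫ + c ^ 2 * ‖x‖ ^ 2 * ‖v‖ ^ 2) := D_pos hc hx hv
  have hD1 : 0 < (1 + 2 * c * ⟪u, x⟫ + c ^ 2 * ‖u‖ ^ 2 * ‖x‖ ^ 2) := D_pos hc hu hx
  have hcxv : c * ‖(mobiusAdd c x v)‖ ^ 2 < 1 := mobius_lt hc hx hv
  have hD2 : 0 < (1 + 2 * c * ⟪u, (mobiusAdd c x v)⟫ + c ^ 2 * ‖u‖ ^ 2 * ‖(mobiusAdd c x v)‖ ^ 2) := D_pos hc hu hcxv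
  have hcw1 : c * ‖(mobiusAdd c u x)‖ ^ 2 < 1 := mobius_lt hc hu hx
  have hcw2 : c * ‖(mobiusAdd c u (mobiusAdd c x v))‖ ^ 2 < 1 := mobius_lt hc hu hcxv
  have hnxv : ‖(mobiusAdd c x v)‖ ^ 2 * (1 + 2 * c * ⟪x, v⟫ + c ^ 2 * ‖x‖ ^ 2 * ‖v‖ ^ 2) = (‖x‖ ^ 2 + 2 * ⟪x, v⟫ + ‖v‖ ^ 2) := mobius_normsq hDxv.ne'
  have hiu : ⟪u, (mobiusAdd c x v)⟫ * (1 + 2 * c * ⟪x, v⟫ + c ^ 2 * ‖x‖ ^ 2 * ‖v‖ ^ 2) = ((1 + 2 * c * ⟪x, v⟫ + c * ‖v‖ ^ 2) * ⟪u, x⟫ + (1 - c * ‖x‖ ^ 2) * ⟪u, v⟫) := by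
    have h := mobius_inner (c := c) (x := x) (y := v) hDxv.ne' u
    rw [real_inner_comm (mobiusAdd c x v) u, h, real_inner_comm u x, real_inner_comm u v]
  have hix : ⟪x, (mobiusAdd c x v)⟫ * (1 + 2 * c * ⟪x, v⟫ + c ^ 2 * ‖x‖ ^ 2 * ‖v‖ ^ 2) = ((1 + 2 * c * ⟪x, v⟫ + c * ‖v‖ ^ 2) * ‖x‖ ^ 2 + (1 - c * ‖x‖ ^ 2) * ⟪x, v⟫) := by
    have h := mobius_inner (c := c) (x := x) (y := v) hDxv.ne' x
    rw [real_inner_comm (mobiusAdd c x v) x, h, real_inner_self_eq_norm_sq, real_inner_comm x v]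
  have hw1u : ⟪(mobiusAdd c u x), u⟫ * (1 + 2 * c * ⟪u, x⟫ + c ^ 2 * ‖u‖ ^ 2 * ‖x‖ ^ 2) = ((1 + 2 * c * ⟪u, x⟫ + c * ‖x‖ ^ 2) * ‖u‖ ^ 2 + (1 - c * ‖u‖ ^ 2) * ⟪u, x⟫) :=
    by
    have h := mobius_inner (c := c) (x := u) (y := x) hD1.ne' u
    rw [h, real_inner_self_eq_norm_sq, real_inner_comm u x]
  have hw1xv : ⟪(mobiusAdd c u x), (mobiusAdd c x v)⟫ * (1 + 2 * c * ⟪u, x⟫ + c ^ 2 * ‖u‖ ^ 2 * ‖x‖ ^ 2)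
      = (1 + 2 * c * ⟪u, x⟫ + c * ‖x‖ ^ 2) * ⟪u, (mobiusAdd c x v)⟫ + (1 - c * ‖u‖ ^ 2) * ⟪x, (mobiusAdd c x v)⟫ :=
    mobius_inner (c := c) (x := u) (y := x) hD1.ne' (mobiusAdd c x v)
  have hnw1 : ‖(mobiusAdd c u x)‖ ^ 2 * (1 + 2 * c * ⟪u, x⟫ + c ^ 2 * ‖u‖ ^ 2 * ‖x‖ ^ 2) = ‖u‖ ^ 2 + 2 * ⟪u, x⟫ + ‖x‖ ^ 2 := mobius_normsq hD1.ne'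
  have hnw2 : ‖(mobiusAdd c u (mobiusAdd c x v))‖ ^ 2 * (1 + 2 * c * ⟪u, (mobiusAdd c x v)⟫ + c ^ 2 * ‖u‖ ^ 2 * ‖(mobiusAdd c x v)‖ ^ 2) = ‖u‖ ^ 2 + 2 * ⟪u, (mobiusAdd c x v)⟫ + ‖(mobiusAdd c x v)‖ ^ 2 := mobius_normsq hD2.ne'
  have h7 : ⟪(mobiusAdd c u x), (mobiusAdd c u (mobiusAdd c x v))⟫ * (1 + 2 * c * ⟪u, (mobiusAdd c x v)⟫ + c ^ 2 * ‖u‖ ^ 2 * ‖(mobiusAdd c x v)‖ ^ 2)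
      = (1 + 2 * c * ⟪u, (mobiusAdd c x v)⟫ + c * ‖(mobiusAdd c x v)‖ ^ 2) * ⟪(mobiusAdd c u x), u⟫ + (1 - c * ‖u‖ ^ 2) * ⟪(mobiusAdd c u x), (mobiusAdd c x v)⟫ := by
    have h := mobius_inner (c := c) (x := u) (y := (mobiusAdd c x v)) hD2.ne' (mobiusAdd c u x)
    rw [real_inner_comm (mobiusAdd c u (mobiusAdd c x v)) (mobiusAdd c u x), h, real_inner_comm (mobiusAdd c u x) u, real_inner_comm (mobiusAdd c u x) (mobiusAdd c x v)]
  have hP2 : (1 + 2 * c * ⟪u, (mobiusAdd c x v)⟫ + c ^ 2 * ‖u‖ ^ 2 * ‖(mobiusAdd c x v)‖ ^ 2) * (1 + 2 * c * ⟪x, v⟫ + c ^ 2 * ‖x‖ ^ 2 * ‖v‖ ^ 2) = ((1 + 2 * c * ⟪x, v⟫ + c ^ 2 * ‖x‖ ^ 2 * ‖v‖ ^ 2) + 2 * c * ((1 + 2 * c * ⟪x, v⟫ + c * ‖v‖ ^ 2) * ⟪u, x⟫ + (1 - c * ‖x‖ ^ 2) * ⟪u, v⟫) + c ^ 2 * ‖u‖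 ^ 2 * (‖x‖ ^ 2 + 2 * ⟪x, v⟫ + ‖v‖ ^ 2)) := by
    linear_combination (2 * c) * hiu + (c ^ 2 * ‖u‖ ^ 2) * hnxv
  have hn2 : ‖(mobiusAdd c u (mobiusAdd c x v))‖ ^ 2 * ((1 + 2 * c * ⟪u, (mobiusAdd c x v)⟫ + c ^ 2 * ‖u‖ ^ 2 * ‖(mobiusAdd c x v)‖ ^ 2) * (1 + 2 * c * ⟪x, v⟫ + c ^ 2 * ‖x‖ ^ 2 * ‖v‖ ^ 2)) = (‖u‖ ^ 2 * (1 + 2 * c * ⟪x, v⟫ + c ^ 2 * ‖x‖ ^ 2 * ‖v‖ ^ 2) + 2 * ((1 + 2 * c * ⟪x, v⟫ + c * ‖v‖ ^ 2) * ⟪u, x⟫ + (1 - c * ‖x‖ ^ 2) * ⟪u, v⟫) + (‖x‖ ^ 2 + 2 * ⟪x, v⟫ + ‖v‖ ^ 2)) := by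
    linear_combination (1 + 2 * c * ⟪x, v⟫ + c ^ 2 * ‖x‖ ^ 2 * ‖v‖ ^ 2) * hnw2 + 2 * hiu + hnxv
  have hI : ⟪(mobiusAdd c u x), (mobiusAdd c u (mobiusAdd c x v))⟫ * ((1 + 2 * c * ⟪u, x⟫ + c ^ 2 * ‖u‖ ^ 2 * ‖x‖ ^ 2) * ((1 + 2 * c * ⟪u, (mobiusAdd c x v)⟫ + c ^ 2 * ‖u‖ ^ 2 * ‖(mobiusAdd c x v)‖ ^ 2) * (1 + 2 * c * ⟪x, v⟫ + c ^ 2 * ‖x‖ ^ 2 * ‖v‖ ^ 2))) = (((1 + 2 * c * ⟪x, v⟫ + c ^ 2 * ‖x‖ ^ 2 * ‖v‖ ^ 2) + 2 * c * ((1 + 2 * c * ⟪x, v⟫ + c * ‖v‖ ^ 2) * ⟪u, x⟫ + (1 - c * ‖x‖ ^ 2) * ⟪u, v⟫) + c * (‖x‖ ^ 2 + 2 * ⟪x, v⟫ + ‖v‖ ^ 2)) * ((1 + 2 * c * ⟪u, x⟫ + c * ‖x‖ ^ 2) * ‖u‖ ^ 2 + (1 - c * ‖u‖ ^ 2) * ⟪u,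 x⟫) + (1 - c * ‖u‖ ^ 2) * ((1 + 2 * c * ⟪u, x⟫ + c * ‖x‖ ^ 2) * ((1 + 2 * c * ⟪x, v⟫ + c * ‖v‖ ^ 2) * ⟪u, x⟫ + (1 - c * ‖x‖ ^ 2) * ⟪u, v⟫) + (1 - c * ‖u‖ ^ 2) * ((1 + 2 * c * ⟪x, v⟫ + c * ‖v‖ ^ 2) * ‖x‖ ^ 2 + (1 - c * ‖x‖ ^ 2) * ⟪x, v⟫))) := by
    linear_combination ((1 + 2 * c * ⟪u, x⟫ + c ^ 2 * ‖u‖ ^ 2 * ‖x‖ ^ 2) * (1 + 2 * c * ⟪x, v⟫ + c ^ 2 * ‖x‖ ^ 2 * ‖v‖ ^ 2)) * h7 + ((1 + 2 * c * ⟪u, (mobiusAdd c x v)⟫ + c * ‖(mobiusAdd c x v)‖ ^ 2) * (1 + 2 * c * ⟪x, v⟫ + c ^ 2 * ‖x‖ ^ 2 * ‖v‖ ^ 2)) * hw1u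
      + (2 * c * ((1 + 2 * c * ⟪u, x⟫ + c * ‖x‖ ^ 2) * ‖u‖ ^ 2 + (1 - c * ‖u‖ ^ 2) * ⟪u, x⟫)) * hiu + (c * ((1 + 2 * c * ⟪u, x⟫ + c * ‖x‖ ^ 2) * ‖u‖ ^ 2 + (1 - c * ‖u‖ ^ 2) * ⟪u, x⟫)) * hnxv + ((1 - c * ‖u‖ ^ 2) * (1 + 2 * c * ⟪x, v⟫ + c ^ 2 * ‖x‖ ^ 2 * ‖v‖ ^ 2)) * hw1xv
      + ((1 - c * ‖u‖ ^ 2) * (1 + 2 * c * ⟪u, x⟫ + c * ‖x‖ ^ 2)) * hiu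
      + ((1 - c * ‖u‖ ^ 2) * (1 - c * ‖u‖ ^ 2)) * hix
  have hDgEq : (1 - 2 * c * ⟪(mobiusAdd c u x), (mobiusAdd c u (mobiusAdd c x v))⟫ + c ^ 2 * ‖(mobiusAdd c u x)‖ ^ 2 * ‖(mobiusAdd c u (mobiusAdd c x v))‖ ^ 2) * ((1 + 2 * c * ⟪u, x⟫ + c ^ 2 * ‖u‖ ^ 2 * ‖x‖ ^ 2) * ((1 + 2 * c * ⟪u, (mobiusAdd c x v)⟫ + c ^ 2 * ‖u‖ ^ 2 * ‖(mobiusAdd c x v)‖ ^ 2) * (1 + 2 * c * ⟪x, v⟫ + c ^ 2 * ‖x‖ ^ 2 * ‖v‖ ^ 2))) = ((1 - c * ‖u‖ ^ 2) * (1 - c * ‖x‖ ^ 2)) ^ 2 := by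
    linear_combination (-2 * c) * hI + (c ^ 2 * (‖(mobiusAdd c u (mobiusAdd c x v))‖ ^ 2 * ((1 + 2 * c * ⟪u, (mobiusAdd c x v)⟫ + c ^ 2 * ‖u‖ ^ 2 * ‖(mobiusAdd c x v)‖ ^ 2) * (1 + 2 * c * ⟪x, v⟫ + c ^ 2 * ‖x‖ ^ 2 * ‖v‖ ^ 2)))) * hnw1
      + (c ^ 2 * (‖u‖ ^ 2 + 2 * ⟪u, x⟫ + ‖x‖ ^ 2)) * hn2 + (1 + 2 * c * ⟪u, x⟫ + c ^ 2 * ‖u‖ ^ 2 * ‖x‖ ^ 2) * hP2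
  have hcw1' : c * ‖-(mobiusAdd c u x)‖ ^ 2 < 1 := by rwa [norm_neg]
  have hDg' : 0 < 1 + 2 * c * ⟪-(mobiusAdd c u x), (mobiusAdd c u (mobiusAdd c x v))⟫ + c ^ 2 * ‖-(mobiusAdd c u x)‖ ^ 2 * ‖(mobiusAdd c u (mobiusAdd c x v))‖ ^ 2 :=
    D_pos hc hcw1' hcw2
  have hfg : (1 - c * ‖gyration c u x v‖ ^ 2) * (1 - 2 * c * ⟪(mobiusAdd c u x), (mobiusAdd c u (mobiusAdd c x v))⟫ + c ^ 2 * ‖(mobiusAdd c u x)‖ ^ 2 * ‖(mobiusAdd c u (mobiusAdd c x v))‖ ^ 2) = (1 - c * ‖(mobiusAdd c u x)‖ ^ 2) * (1 - c * ‖(mobiusAdd c u (mobiusAdd c x v))‖ ^ 2) := by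
    have h := mobius_one_sub (c := c) (x := -(mobiusAdd c u x)) (y := (mobiusAdd c u (mobiusAdd c x v))) hDg'.ne'
    rw [inner_neg_left, norm_neg] at h
    rw [gyration]
    linear_combination h
  have hfw1 : (1 - c * ‖(mobiusAdd c u x)‖ ^ 2) * (1 + 2 * c * ⟪u, x⟫ + c ^ 2 * ‖u‖ ^ 2 * ‖x‖ ^ 2) = (1 - c * ‖u‖ ^ 2) * (1 - c * ‖x‖ ^ 2) :=
    mobius_one_sub hD1.ne'
  have hfw2 : (1 - c * ‖(mobiusAdd c u (mobiusAdd c x v))‖ ^ 2) * (1 + 2 * c * ⟪u, (mobiusAdd c x v)⟫ + c ^ 2 * ‖u‖ ^ 2 * ‖(mobiusAdd c x v)‖ ^ 2) = (1 - c * ‖u‖ ^ 2) * (1 - c * ‖(mobiusAdd c x v)‖ ^ 2) :=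
    mobius_one_sub hD2.ne'
  have hfxv : (1 - c * ‖(mobiusAdd c x v)‖ ^ 2) * (1 + 2 * c * ⟪x, v⟫ + c ^ 2 * ‖x‖ ^ 2 * ‖v‖ ^ 2) = (1 - c * ‖x‖ ^ 2) * (1 - c * ‖v‖ ^ 2) :=
    mobius_one_sub hDxv.ne'
  have hkey : (1 - c * ‖gyration c u x v‖ ^ 2) * (((1 - c * ‖u‖ ^ 2) * (1 - c * ‖x‖ ^ 2)) ^ 2)
      = (1 - c * ‖v‖ ^ 2) * (((1 - c * ‖u‖ ^ 2) * (1 - c * ‖x‖ ^ 2)) ^ 2) := by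
    linear_combination ((1 + 2 * c * ⟪u, x⟫ + c ^ 2 * ‖u‖ ^ 2 * ‖x‖ ^ 2) * ((1 + 2 * c * ⟪u, (mobiusAdd c x v)⟫ + c ^ 2 * ‖u‖ ^ 2 * ‖(mobiusAdd c x v)‖ ^ 2) * (1 + 2 * c * ⟪x, v⟫ + c ^ 2 * ‖x‖ ^ 2 * ‖v‖ ^ 2))) * hfg
      - (1 - c * ‖gyration c u x v‖ ^ 2) * hDgEq
      + ((1 - c * ‖(mobiusAdd c u (mobiusAdd c x v))‖ ^ 2) * ((1 + 2 * c * ⟪u, (mobiusAdd c x v)⟫ + c ^ 2 * ‖u‖ ^ 2 * ‖(mobiusAdd c x v)‖ ^ 2) * (1 + 2 * c * ⟪x, v⟫ + c ^ 2 * ‖x‖ ^ 2 * ‖v‖ ^ 2))) * hfw1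
      + ((1 - c * ‖u‖ ^ 2) * (1 - c * ‖x‖ ^ 2) * (1 + 2 * c * ⟪x, v⟫ + c ^ 2 * ‖x‖ ^ 2 * ‖v‖ ^ 2)) * hfw2
      + ((1 - c * ‖u‖ ^ 2) ^ 2 * (1 - c * ‖x‖ ^ 2)) * hfxv
  have h1a : (0:ℝ) < 1 - c * ‖u‖ ^ 2 := by linarith
  have h1b : (0:ℝ) < 1 - c * ‖x‖ ^ 2 := by linarith
  have hne : (((1 - c * ‖u‖ ^ 2) * (1 - c * ‖x‖ ^ 2)) ^ 2) ≠ 0 :=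
    pow_ne_zero 2 (mul_ne_zero h1a.ne' h1b.ne')
  have h2 := mul_right_cancel₀ hne hkey
  have hsq : ‖gyration c u x v‖ ^ 2 = ‖v‖ ^ 2 := by
    have h3 : c * ‖gyration c u x v‖ ^ 2 = c * ‖v‖ ^ 2 := by linarith
    exact mul_left_cancel₀ hc.ne' h3
  rw [← Real.sqrt_sq (norm_nonneg (gyration c u x v)), ← Real.sqrt_sq (norm_nonneg v), hsq]
end

section
/- (Isometries fixing the origin are orthogonal.) Let c > 0 and let τ : E → E be a map with τ(0) = 0 which sends the Poincaré ball B_c into B_c, is surjective onto B_c, and preserves the hyperbolic distance: d_c(τ x, τ y) = d_c(x, y) for all x, y ∈ B_c. Then there exists a linear isometry W : E → E such that τ x = W x for all x ∈ B_c. -/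
open scoped RealInnerProductSpace

variable {E : Type*} [NormedAddCommGroup E] [InnerProductSpace ℝ E] [FiniteDimensional ℝ E]

/-- Inverse hyperbolic tangent. -/
noncomputable def artanh (t : ℝ) : ℝ := (1 / 2) * Real.log ((1 + t) / (1 - t))

/-- Hyperbolic distance on the Poincaré ball of curvature `-c`. -/
noncomputable def hypDist (c : ℝ) (x y : E) : ℝ :=
  (2 / Real.sqrt c) * artanh (Real.sqrt c * ‖mobiusAdd c (-x) y‖)

lemma artanh_inj {a b : ℝ} (ha0 : 0 ≤ a) (ha1 : a < 1) (hb0 : 0 ≤ b) (hb1 : b < 1)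
    (h : artanh a = artanh b) : a = b := by
  have hua : 0 < (1 + a) / (1 - a) := div_pos (by linarith) (by linarith)
  have hub : 0 < (1 + b) / (1 - b) := div_pos (by linarith) (by linarith)
  have hlog : Real.log ((1 + a) / (1 - a)) = Real.log ((1 + b) / (1 - b)) := by
    unfold artanh at h; linarith
  have heq : (1 + a) / (1 - a) = (1 + b) / (1 - b) := by
    rw [← Real.exp_log hua, ← Real.exp_log hub, hlog]
  have ha' : (1:ℝ) - a ≠ 0 := by linarith
  have hb' : (1:ℝ) - b ≠ 0 := by linarith
  field_simp at heq
  nlinarith [heq]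

lemma norm_combo_sq (A B : ℝ) (x y : E) :
    ‖A • x + B • y‖ ^ 2 = A^2*‖x‖^2 + 2*A*B*⟪x,y⟫ + B^2*‖y‖^2 := by
  rw [← real_inner_self_eq_norm_sq]
  simp only [inner_add_left, inner_add_right, real_inner_smul_left, real_inner_smul_right,
    real_inner_comm y x]
  simp only [real_inner_self_eq_norm_sq]
  ring

lemma mobius_denom_pos (c : ℝ) (hc : 0 < c) (x y : E) (hx : c*‖x‖^2 < 1) (hy : c*‖y‖^2 < 1) :
    0 < 1 + 2*c*⟪x,y⟫ + c^2*‖x‖^2*‖y‖^2 := by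
  have h1 := abs_real_inner_le_norm x y
  have hp : -(‖x‖*‖y‖) ≤ ⟪x,y⟫ := (abs_le.1 h1).1
  have h2 : (c*‖x‖*‖y‖)^2 < 1 := by
    nlinarith [mul_nonneg hc.le (sq_nonneg ‖x‖), mul_nonneg hc.le (sq_nonneg ‖y‖)]
  have h3 : c*‖x‖*‖y‖ < 1 := by
    nlinarith [mul_nonneg (mul_nonneg hc.le (norm_nonneg x)) (norm_nonneg y)]
  have hp' : 0 ≤ c*(⟪x,y⟫ + ‖x‖*‖y‖) := mul_nonneg hc.le (by linarith)
  have h4 : 0 < (1 - c*‖x‖*‖y‖)^2 := pow_pos (by linarith) 2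
  nlinarith [h4, hp']

lemma mobius_norm_sq (c : ℝ) (hc : 0 < c) (x y : E) (hx : c*‖x‖^2 < 1) (hy : c*‖y‖^2 < 1) :
    ‖mobiusAdd c x y‖^2 * (1 + 2*c*⟪x,y⟫ + c^2*‖x‖^2*‖y‖^2) = ‖x+y‖^2 := by
  have hD := mobius_denom_pos c hc x y hx hy
  rw [mobiusAdd, norm_smul, mul_pow, Real.norm_eq_abs, sq_abs, norm_combo_sq, norm_add_sq_real]
  field_simp
  ring

lemma mobius_mem_ball (c : ℝ) (hc : 0 < c) (x y : E) (hx : c*‖x‖^2 < 1) (hy : c*‖y‖^2 < 1) :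
    c*‖mobiusAdd c x y‖^2 < 1 := by
  have hD := mobius_denom_pos c hc x y hx hy
  have h := mobius_norm_sq c hc x y hx hy
  have key : c*‖x+y‖^2 < 1 + 2*c*⟪x,y⟫ + c^2*‖x‖^2*‖y‖^2 := by
    rw [norm_add_sq_real]; nlinarith
  nlinarith [sq_nonneg ‖mobiusAdd c x y‖]

lemma sqc_mul_norm_lt_one {c : ℝ} (hc : 0 < c) {x : E} (h : c*‖x‖^2 < 1) :
    Real.sqrt c * ‖x‖ < 1 := by
  have hs : (Real.sqrt c * ‖x‖)^2 = c*‖x‖^2 := by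
    rw [mul_pow, Real.sq_sqrt hc.le]
  nlinarith [mul_nonneg (Real.sqrt_nonneg c) (norm_nonneg x)]

theorem isometry_fixing_origin_is_orthogonal (c : ℝ) (hc : 0 < c) (τ : E → E)
    (hτ0 : τ 0 = 0)
    (hmaps : ∀ x : E, c * ‖x‖ ^ 2 < 1 → c * ‖τ x‖ ^ 2 < 1)
    (hsurj : ∀ y : E, c * ‖y‖ ^ 2 < 1 → ∃ x : E, c * ‖x‖ ^ 2 < 1 ∧ τ x = y)
    (hiso : ∀ x y : E, c * ‖x‖ ^ 2 < 1 → c * ‖y‖ ^ 2 < 1 →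
      hypDist c (τ x) (τ y) = hypDist c x y) :
    ∃ W : E →ₗᵢ[ℝ] E, ∀ x : E, c * ‖x‖ ^ 2 < 1 → τ x = W x := by
  have hsc : 0 < Real.sqrt c := Real.sqrt_pos.2 hc
  have h2sc : (2 / Real.sqrt c) ≠ 0 := by positivity
  have hball0 : c * ‖(0:E)‖^2 < 1 := by simp
  have h0add : ∀ y : E, mobiusAdd c (-(0:E)) y = y := by
    intro y; simp [mobiusAdd]
  -- artanh equality from hypDist equality
  have key : ∀ x y : E, c*‖x‖^2 < 1 → c*‖y‖^2 < 1 →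
      ‖mobiusAdd c (-(τ x)) (τ y)‖ = ‖mobiusAdd c (-x) y‖ := by
    intro x y hx hy
    have h := hiso x y hx hy
    unfold hypDist at h
    have h' : artanh (Real.sqrt c * ‖mobiusAdd c (-(τ x)) (τ y)‖)
        = artanh (Real.sqrt c * ‖mobiusAdd c (-x) y‖) := by
      exact mul_left_cancel₀ h2sc h
    have hxb : c*‖(-x)‖^2 < 1 := by simpa using hx
    have hτxb : c*‖(-(τ x))‖^2 < 1 := by simpa using hmaps x hx
    have hm1 := mobius_mem_ball c hc (-x) y hxb hy
    have hm2 := mobius_mem_ball c hc (-(τ x)) (τ y) hτxb (hmaps y hy)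
    have := artanh_inj (by positivity) (sqc_mul_norm_lt_one hc hm2)
      (by positivity) (sqc_mul_norm_lt_one hc hm1) h'
    exact mul_left_cancel₀ (ne_of_gt hsc) this
  -- norm preservation
  have hnorm : ∀ x : E, c*‖x‖^2 < 1 → ‖τ x‖ = ‖x‖ := by
    intro x hx
    have h := key 0 x hball0 hx
    rw [hτ0, h0add, h0add] at h
    exact h
  -- inner product preservation
  have hinner : ∀ x y : E, c*‖x‖^2 < 1 → c*‖y‖^2 < 1 → ⟪τ x, τ y⟫ = ⟪x, y⟫ := by
    intro x y hx hy
    have hxb : c*‖(-x)‖^2 < 1 := by simpa using hx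
    have hτxb : c*‖(-(τ x))‖^2 < 1 := by simpa using hmaps x hx
    have h1 := mobius_norm_sq c hc (-x) y hxb hy
    have h2 := mobius_norm_sq c hc (-(τ x)) (τ y) hτxb (hmaps y hy)
    have hm := key x y hx hy
    have hnx := hnorm x hx
    have hny := hnorm y hy
    simp only [norm_add_sq_real, inner_neg_left, norm_neg] at h1 h2
    rw [hm, hnx, hny] at h2
    have hball := mobius_mem_ball c hc (-x) y hxb hy
    have hfac : (⟪x,y⟫ - ⟪τ x, τ y⟫) * (1 - c*‖mobiusAdd c (-x) y‖^2) = 0 := by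
      nlinarith [h1, h2]
    rcases mul_eq_zero.1 hfac with h | h
    · linarith [sub_eq_zero.1 h]
    · exfalso; linarith
  -- construct the isometry
  set n := Module.finrank ℝ E with hn
  set b : OrthonormalBasis (Fin n) ℝ E := stdOrthonormalBasis ℝ E with hb
  set ε : ℝ := 1 / (2 * Real.sqrt c) with hε
  have hεpos : 0 < ε := by positivity
  have hεball : ∀ i : Fin n, c * ‖ε • b i‖^2 < 1 := by
    intro i
    rw [norm_smul, Real.norm_eq_abs, abs_of_pos hεpos, b.orthonormal.1 i, mul_one, hε]
    rw [div_pow, one_pow, mul_pow, Real.sq_sqrt hc.le, mul_one_div,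
      div_lt_one (by positivity)]
    nlinarith
  set v : Fin n → E := fun i => ε⁻¹ • τ (ε • b i) with hv
  have hvon : Orthonormal ℝ v := by
    rw [orthonormal_iff_ite]
    intro i j
    have := hinner (ε • b i) (ε • b j) (hεball i) (hεball j)
    rw [hv]
    simp only [real_inner_smul_left, real_inner_smul_right]
    rw [this]
    simp only [real_inner_smul_left, real_inner_smul_right]
    have hbij := orthonormal_iff_ite.1 b.orthonormal i j
    rw [hbij]
    by_cases hij : i = j <;> simp [hij, hεpos.ne']
  have hspan : Submodule.span ℝ (Set.range v) = ⊤ :=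
    hvon.linearIndependent.span_eq_top_of_card_eq_finrank' (by simp [hn])
  set vb : OrthonormalBasis (Fin n) ℝ E := OrthonormalBasis.mk hvon hspan.ge with hvb
  refine ⟨(b.repr.trans vb.repr.symm).toLinearIsometry, fun x hx => ?_⟩
  apply vb.repr.injective
  ext i
  have hvbi : vb i = v i := by rw [hvb]; simp
  have h1 : vb.repr (τ x) i = ⟪vb i, τ x⟫ := vb.repr_apply_apply (τ x) i
  have h2 : ⟪vb i, τ x⟫ = ⟪b i, x⟫ := by
    rw [hvbi, hv]
    simp only [real_inner_smul_left]
    rw [hinner (ε • b i) x (hεball i) hx]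
    rw [real_inner_smul_left]
    field_simp
  have h3 : vb.repr ((b.repr.trans vb.repr.symm).toLinearIsometry x) i = ⟪b i, x⟫ := by
    simp [LinearIsometryEquiv.toLinearIsometry, b.repr_apply_apply]
  rw [h1, h2, h3]
end

section
/- (Geodesic endpoints.) Let c > 0 and x, y ∈ E with c·‖x‖² < 1 and c·‖y‖² < 1. Define Möbius scalar multiplication t ⊗_c v = (1/√c)·tanh(t·artanh(√c·‖v‖))·v/‖v‖ for v ≠ 0 and t ⊗_c 0 = 0, and the curve γ(t) = x ⊕_c ((−x ⊕_c y) ⊗_c t). Then γ(0) = x and γ(1) = y. -/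
open scoped Classical

open scoped RealInnerProductSpace

variable {E : Type*} [NormedAddCommGroup E] [InnerProductSpace ℝ E] [FiniteDimensional ℝ E]

/-- Möbius scalar multiplication `t ⊗_c v`. -/
noncomputable def mobiusSmul (c t : ℝ) (v : E) : E :=
  if v = 0 then 0
  else ((1 / Real.sqrt c) * Real.tanh (t * artanh (Real.sqrt c * ‖v‖)) / ‖v‖) • v

lemma my_tanh_artanh {t : ℝ} (h1 : -1 < t) (h2 : t < 1) : Real.tanh (artanh t) = t := by
  have ht : (0:ℝ) < 1 - t := by linarith
  have hpos : 0 < (1 + t) / (1 - t) := div_pos (by linarith) ht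
  have h2u : Real.exp (artanh t) * Real.exp (artanh t) = (1 + t) / (1 - t) := by
    rw [← Real.exp_add, artanh, show (1/2) * Real.log ((1+t)/(1-t)) + (1/2) * Real.log ((1+t)/(1-t)) = Real.log ((1+t)/(1-t)) by ring]
    exact Real.exp_log hpos
  have hE : 0 < Real.exp (artanh t) := Real.exp_pos _
  have hform : Real.tanh (artanh t) =
      (Real.exp (artanh t) * Real.exp (artanh t) - 1) / (Real.exp (artanh t) * Real.exp (artanh t) + 1) := by
    rw [Real.tanh_eq_sinh_div_cosh, Real.sinh_eq, Real.cosh_eq, Real.exp_neg]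
    have hden : Real.exp (artanh t) ≠ 0 := ne_of_gt hE
    field_simp
    try ring
  rw [hform, h2u]
  rw [div_eq_iff (by positivity : ((1+t)/(1-t) + 1) ≠ 0)]
  field_simp
  ring

lemma den_pos (c : ℝ) (hc : 0 < c) (u w : E)
    (hu : c * ‖u‖ ^ 2 < 1) (hw : c * ‖w‖ ^ 2 < 1) :
    0 < 1 + 2 * c * ⟪u, w⟫ + c ^ 2 * ‖u‖ ^ 2 * ‖w‖ ^ 2 := by
  have hCS := abs_real_inner_le_norm u w
  have h1 := abs_le.mp hCS
  have hnu : 0 ≤ ‖u‖ := norm_nonneg u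
  have hnw : 0 ≤ ‖w‖ := norm_nonneg w
  have hsq : (c * (‖u‖ * ‖w‖)) ^ 2 < 1 := by
    have e : (c * (‖u‖ * ‖w‖)) ^ 2 = (c * ‖u‖ ^ 2) * (c * ‖w‖ ^ 2) := by ring
    rw [e]
    have h0u : 0 ≤ c * ‖u‖ ^ 2 := by positivity
    have h0w : 0 ≤ c * ‖w‖ ^ 2 := by positivity
    nlinarith
  have hlt : c * (‖u‖ * ‖w‖) < 1 := by nlinarith [mul_nonneg (mul_nonneg hc.le hnu) hnw]
  nlinarith [sq_nonneg (1 - c * (‖u‖ * ‖w‖)), h1.1]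

lemma norm_mobiusAdd_lt (c : ℝ) (hc : 0 < c) (u w : E)
    (hu : c * ‖u‖ ^ 2 < 1) (hw : c * ‖w‖ ^ 2 < 1) :
    c * ‖mobiusAdd c u w‖ ^ 2 < 1 := by
  set a := ⟪u, w⟫ with ha
  set nu := ‖u‖ ^ 2 with hnu
  set nw := ‖w‖ ^ 2 with hnw
  set A := 1 + 2 * c * a + c * nw with hA
  set B := 1 - c * nu with hB
  set D := 1 + 2 * c * a + c ^ 2 * nu * nw with hDdef
  have hD : 0 < D := den_pos c hc u w hu hw
  have hD0 : D ≠ 0 := ne_of_gt hD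
  have hv : mobiusAdd c u w = (A / D) • u + (B / D) • w := by
    rw [mobiusAdd, smul_add, smul_smul, smul_smul]
    congr 2 <;> simp only [hA, hB, hDdef, ha, hnu, hnw] <;> ring
  have hnv : ‖mobiusAdd c u w‖ ^ 2
      = (A / D) ^ 2 * nu + 2 * (A / D) * (B / D) * a + (B / D) ^ 2 * nw := by
    rw [hv, ← real_inner_self_eq_norm_sq]
    simp only [inner_add_add_self, inner_smul_left, inner_smul_right,
      real_inner_self_eq_norm_sq, real_inner_comm u w, ← ha, ← hnu, ← hnw, conj_trivial]
    ring
  have hfrac : 1 - c * ((A / D) ^ 2 * nu + 2 * (A / D) * (B / D) * a + (B / D) ^ 2 * nw)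
      = (B * (1 - c * nw)) / D := by
    field_simp
    rw [hA, hB, hDdef]
    ring
  have hpos : 0 < (B * (1 - c * nw)) / D :=
    div_pos (mul_pos (by rw [hB]; linarith) (by linarith)) hD
  rw [hnv]; linarith [hfrac ▸ hpos]

set_option maxHeartbeats 2000000 in
lemma mobius_left_cancel (c : ℝ) (hc : 0 < c) (x y : E)
    (hx : c * ‖x‖ ^ 2 < 1) (hy : c * ‖y‖ ^ 2 < 1) :
    mobiusAdd c x (mobiusAdd c (-x) y) = y := by
  set a := ⟪x, y⟫ with ha
  set nx := ‖x‖ ^ 2 with hnx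
  set ny := ‖y‖ ^ 2 with hny
  set A := 1 - 2 * c * a + c * ny with hA
  set B := 1 - c * nx with hB
  set D := 1 - 2 * c * a + c ^ 2 * nx * ny with hDdef
  have hD : 0 < D := by
    have := den_pos c hc (-x) y (by simpa using hx) hy
    simpa [inner_neg_left, hDdef, ha, hnx, hny, ← sub_eq_add_neg] using this
  have hD0 : D ≠ 0 := ne_of_gt hD
  set v := mobiusAdd c (-x) y with hvdef
  have hv : v = (-(A / D)) • x + (B / D) • y := by
    rw [hvdef, mobiusAdd, inner_neg_left, norm_neg]
    rw [smul_add, smul_smul, smul_smul, smul_neg, ← neg_smul]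
    congr 2 <;> simp only [hA, hB, hDdef, ha, hnx, hny] <;> ring
  set ip : ℝ := -(A / D) * nx + (B / D) * a with hipdef
  set nv : ℝ := (A / D) ^ 2 * nx - 2 * (A / D) * (B / D) * a + (B / D) ^ 2 * ny with hnvdef
  have hip : ⟪x, v⟫ = ip := by
    rw [hv, hipdef]
    simp [inner_add_right, inner_smul_right, real_inner_self_eq_norm_sq, ← ha, ← hnx]
    try ring
  have hnv : ‖v‖ ^ 2 = nv := by
    rw [hv, hnvdef, ← real_inner_self_eq_norm_sq]
    simp only [inner_add_add_self, inner_smul_left, inner_smul_right, inner_neg_left, inner_neg_right,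
      real_inner_self_eq_norm_sq, real_inner_comm x y, ← ha, ← hnx, ← hny, conj_trivial, neg_smul]
    ring
  have hv1 : c * ‖v‖ ^ 2 < 1 := by
    rw [hvdef]
    exact norm_mobiusAdd_lt c hc (-x) y (by simpa using hx) hy
  set Cc := D ^ 2 + 2 * c * (-(A * nx) + B * a) * D + c * (A ^ 2 * nx - 2 * A * B * a + B ^ 2 * ny) with hCdef
  set N2 := D ^ 2 + 2 * c * (-(A * nx) + B * a) * D + c ^ 2 * nx * (A ^ 2 * nx - 2 * A * B * a + B ^ 2 * ny) with hN2def
  have hCval : 1 + 2 * c * ip + c * nv = Cc / D ^ 2 := by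
    rw [hipdef, hnvdef, hCdef]
    field_simp
  have hN2val : 1 + 2 * c * ip + c ^ 2 * nx * nv = N2 / D ^ 2 := by
    rw [hipdef, hnvdef, hN2def]
    field_simp
  have hD2 : 0 < 1 + 2 * c * ip + c ^ 2 * nx * nv := by
    have := den_pos c hc x v hx hv1
    rwa [hip, hnv, ← hnx] at this
  have hN2pos : 0 < N2 := by
    rw [hN2val] at hD2
    have hD2sq : 0 < D ^ 2 := by positivity
    exact (div_pos_iff.mp hD2).elim (fun h => h.1) (fun h => absurd h.2 (not_lt.mpr hD2sq.le))
  have hN20 : N2 ≠ 0 := ne_of_gt hN2pos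
  have hB0 : B ≠ 0 := by rw [hB]; nlinarith
  have e0 : Cc = A * B * D := by rw [hCdef, hA, hB, hDdef]; ring
  have eE2 : B ^ 2 * D = N2 := by rw [hN2def, hA, hB, hDdef]; ring
  have key : mobiusAdd c x v =
      ((1 / (N2 / D ^ 2)) * (Cc / D ^ 2 + (1 - c * nx) * (-(A / D)))) • x
        + ((1 / (N2 / D ^ 2)) * ((1 - c * nx) * (B / D))) • y := by
    rw [mobiusAdd, hip, hnv, hCval, hN2val, hv, ← hnx]
    module
  have ex : (1 / (N2 / D ^ 2)) * (Cc / D ^ 2 + (1 - c * nx) * (-(A / D))) = 0 := by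
    have hz : Cc / D ^ 2 + (1 - c * nx) * (-(A / D)) = 0 := by
      rw [e0, ← hB]
      field_simp
      ring
    rw [hz, mul_zero]
  have ey : (1 / (N2 / D ^ 2)) * ((1 - c * nx) * (B / D)) = 1 := by
    rw [← eE2, ← hB]
    field_simp
  rw [key, ex, ey, zero_smul, one_smul, zero_add]

theorem geodesic_endpoints (c : ℝ) (hc : 0 < c) (x y : E)
    (hx : c * ‖x‖ ^ 2 < 1) (hy : c * ‖y‖ ^ 2 < 1) :
    mobiusAdd c x (mobiusSmul c 0 (mobiusAdd c (-x) y)) = x ∧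
      mobiusAdd c x (mobiusSmul c 1 (mobiusAdd c (-x) y)) = y := by
  set v := mobiusAdd c (-x) y with hvdef
  constructor
  · have h0 : mobiusSmul c 0 v = 0 := by
      rw [mobiusSmul]
      split_ifs with h
      · rfl
      · simp [Real.tanh_zero]
    rw [h0, mobiusAdd]
    simp
  · have hv1 : c * ‖v‖ ^ 2 < 1 := by
      rw [hvdef]
      exact norm_mobiusAdd_lt c hc (-x) y (by simpa using hx) hy
    have h1 : mobiusSmul c 1 v = v := by
      rw [mobiusSmul]
      split_ifs with h
      · rw [h]
      · have hnv : 0 < ‖v‖ := norm_pos_iff.mpr h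
        have hsc : 0 < Real.sqrt c := Real.sqrt_pos.mpr hc
        have hsq : (Real.sqrt c * ‖v‖) ^ 2 = c * ‖v‖ ^ 2 := by
          rw [mul_pow, Real.sq_sqrt hc.le]
        have hlt1 : Real.sqrt c * ‖v‖ < 1 := by nlinarith [mul_pos hsc hnv]
        have hgt : -1 < Real.sqrt c * ‖v‖ := by nlinarith [mul_pos hsc hnv]
        rw [one_mul, my_tanh_artanh hgt hlt1]
        rw [show (1 / Real.sqrt c) * (Real.sqrt c * ‖v‖) / ‖v‖ = 1 by field_simp]
        rw [one_smul]
    rw [h1, hvdef]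
    exact mobius_left_cancel c hc x y hx hy
end
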